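/- Let P be a monic polynomial of degree n with P(0) ≠ 0, where P(z) - P(0) = (z-b₁)⋯(z-b_{m₁})·(z-c₁)^{l₁}⋯(z-c_{m₂})^{l_{m₂}} with distinct roots, l_i ≥ 2, and each l_i < n. Suppose g is a nonconstant meromorphic function on ℂ and P∘f = (P∘g)/(c₁·(P∘g - P(0))) for some nonconstant meromorphic f and nonzero constant c₁. Then every zero of g - b_j (1 ≤ j ≤ m₁) has multiplicity at least n, and every zero of g - c_i (1 ≤ i ≤ m₂) has multiplicity at least 2. -/

import Mathlib

open scoped Classical
open Polynomial Filter MeasureTheory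

noncomputable section

/-- `f` is meromorphic on all of `ℂ`. -/
def Mero (f : ℂ → ℂ) : Prop := ∀ z : ℂ, MeromorphicAt f z

/-- `f` is a nonconstant function. -/
def Nonconst (f : ℂ → ℂ) : Prop := ¬ ∃ c : ℂ, ∀ z, f z = c

/-- The order (of vanishing) of a meromorphic function at a point, as an integer. -/
def mOrder (f : ℂ → ℂ) (z : ℂ) : ℤ :=
  if h : MeromorphicAt f z then ((meromorphicOrderAt f z).untopD 0) else 0

/-- Pole multiplicity of `f` at `z`. -/
def poleMult (f : ℂ → ℂ) (z : ℂ) : ℕ := (-(mOrder f z)).toNat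

/-- Multiplicity of `z` as an `a`-point of `f`. -/
def aMult (f : ℂ → ℂ) (a : ℂ) (z : ℂ) : ℕ := (mOrder (fun w => f w - a) z).toNat

/-- Unintegrated counting function for a multiplicity assignment `m`. -/
def cnt (m : ℂ → ℕ) (t : ℝ) : ℝ := ∑' z : {z : ℂ | ‖z‖ ≤ t}, (m z.1 : ℝ)

/-- Integrated Nevanlinna counting function for a multiplicity assignment `m`. -/
def Nint (m : ℂ → ℕ) (r : ℝ) : ℝ := ∫ t in (1:ℝ)..r, cnt m t / t

/-- Integrated counting function of poles, `N(r,∞;f)`. -/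
def Npoles (f : ℂ → ℂ) (r : ℝ) : ℝ := Nint (poleMult f) r

/-- Reduced counting function of poles, `N̄(r,∞;f)`. -/
def NbarPoles (f : ℂ → ℂ) (r : ℝ) : ℝ := Nint (fun z => min (poleMult f z) 1) r

/-- Counting function of `a`-points, `N(r,a;f)`. -/
def Nval (f : ℂ → ℂ) (a : ℂ) (r : ℝ) : ℝ := Nint (aMult f a) r

/-- Reduced counting function of `a`-points, `N̄(r,a;f)`. -/
def NbarVal (f : ℂ → ℂ) (a : ℂ) (r : ℝ) : ℝ := Nint (fun z => min (aMult f a z) 1) r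

/-- Positive part of the logarithm. -/
def logPlus (x : ℝ) : ℝ := max (Real.log x) 0

/-- Nevanlinna proximity function `m(r,f)`. -/
def prox (f : ℂ → ℂ) (r : ℝ) : ℝ :=
  (2 * Real.pi)⁻¹ * ∫ θ in (0:ℝ)..(2 * Real.pi),
    logPlus ‖f (r * Complex.exp (θ * Complex.I))‖

/-- Nevanlinna characteristic function `T(r,f)`. -/
def Tchar (f : ℂ → ℂ) (r : ℝ) : ℝ := prox f r + Npoles f r

/-- Multiplicity of `z` as an `a`-point of `f`, truncated with weight `l`. -/
def wMult (f : ℂ → ℂ) (a : ℂ) (l : ℕ) (z : ℂ) : ℕ :=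
  if aMult f a z ≤ l then aMult f a z else l + 1

/-- The weighted multiplicity function of `E_f(S,l)` at a point. -/
def EsetW (f : ℂ → ℂ) (S : Finset ℂ) (l : ℕ) (z : ℂ) : ℕ := ∑ a ∈ S, wMult f a l z

/-- The multiplicity function of `E_f(S)` (CM sharing) at a point. -/
def Eset (f : ℂ → ℂ) (S : Finset ℂ) (z : ℂ) : ℕ := ∑ a ∈ S, aMult f a z

/-- `P` is a strong uniqueness polynomial for meromorphic functions. -/
def SUPM (P : ℂ[X]) : Prop :=
  ∀ f g : ℂ → ℂ, Mero f → Mero g → Nonconst f → Nonconst g →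
    ∀ c : ℂ, c ≠ 0 → (∀ z, P.eval (f z) = c * P.eval (g z)) → f = g

/-- `P` is a uniqueness polynomial for meromorphic functions. -/
def UPM (P : ℂ[X]) : Prop :=
  ∀ f g : ℂ → ℂ, Mero f → Mero g → Nonconst f → Nonconst g →
    (∀ z, P.eval (f z) = P.eval (g z)) → f = g

/-- `P` is a strong uniqueness polynomial for entire functions. -/
def SUPE (P : ℂ[X]) : Prop :=
  ∀ f g : ℂ → ℂ, Differentiable ℂ f → Differentiable ℂ g → Nonconst f → Nonconst g →
    ∀ c : ℂ, c ≠ 0 → (∀ z, P.eval (f z) = c * P.eval (g z)) → f = g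

/-- `P` is a uniqueness polynomial for entire functions. -/
def UPE (P : ℂ[X]) : Prop :=
  ∀ f g : ℂ → ℂ, Differentiable ℂ f → Differentiable ℂ g → Nonconst f → Nonconst g →
    (∀ z, P.eval (f z) = P.eval (g z)) → f = g

/-- `S` is a unique range set for meromorphic functions with weight `l`. -/
def URSMweight (S : Finset ℂ) (l : ℕ) : Prop :=
  ∀ f g : ℂ → ℂ, Mero f → Mero g → Nonconst f → Nonconst g →
    (∀ z, EsetW f S l z = EsetW g S l z) → f = g

/-- `S` is a unique range set for meromorphic functions (CM sharing). -/
def URSM (S : Finset ℂ) : Prop :=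
  ∀ f g : ℂ → ℂ, Mero f → Mero g → Nonconst f → Nonconst g →
    (∀ z, Eset f S z = Eset g S z) → f = g

/-- The set of distinct simple roots of a polynomial. -/
def simpleRoots (Q : ℂ[X]) : Finset ℂ := Q.roots.toFinset.filter (fun z => Q.rootMultiplicity z = 1)

/-- The set of distinct multiple roots of a polynomial. -/
def multRoots (Q : ℂ[X]) : Finset ℂ := Q.roots.toFinset.filter (fun z => 2 ≤ Q.rootMultiplicity z)

end


section Aux

open Polynomial Filter

noncomputable def MeromorphicAt.order {f : ℂ → ℂ} {z : ℂ} (_ : MeromorphicAt f z) : WithTop ℤ :=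
  meromorphicOrderAt f z

lemma MeromorphicAt.order_def {f : ℂ → ℂ} {z : ℂ} (hf : MeromorphicAt f z) :
    hf.order = meromorphicOrderAt f z := rfl

lemma MeromorphicAt.order_eq_int_iff {f : ℂ → ℂ} {z : ℂ} (hf : MeromorphicAt f z) (n : ℤ) :
    hf.order = n ↔ ∃ g : ℂ → ℂ, AnalyticAt ℂ g z ∧ g z ≠ 0 ∧
      ∀ᶠ w in nhdsWithin z {z}ᶜ, f w = (w - z) ^ n • g w :=
  meromorphicOrderAt_eq_int_iff hf

lemma MeromorphicAt.order_eq_top_iff {f : ℂ → ℂ} {z : ℂ} (hf : MeromorphicAt f z) :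
    hf.order = ⊤ ↔ ∀ᶠ w in nhdsWithin z {z}ᶜ, f w = 0 :=
  meromorphicOrderAt_eq_top_iff

private lemma ord_fun_congr {f g : ℂ → ℂ} {z : ℂ} (h : f = g) (hf : MeromorphicAt f z)
    (hg : MeromorphicAt g z) : hf.order = hg.order := by subst h; rfl

private lemma ord_const {c : ℂ} (hc : c ≠ 0) (z : ℂ) (h : MeromorphicAt (fun _ => c) z) :
    h.order = ((0 : ℤ) : WithTop ℤ) := by
  rw [h.order_eq_int_iff]
  exact ⟨fun _ => c, analyticAt_const, hc, Eventually.of_forall fun w => by simp⟩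

private lemma ord_congr {f g : ℂ → ℂ} {z : ℂ} (hf : MeromorphicAt f z) (hg : MeromorphicAt g z)
    (hfg : f =ᶠ[nhdsWithin z {z}ᶜ] g) : hf.order = hg.order := by
  by_cases htop : hf.order = ⊤
  · rw [htop, eq_comm, hg.order_eq_top_iff]
    filter_upwards [hf.order_eq_top_iff.mp htop, hfg] with w h1 h2
    rw [← h2]; exact h1
  · obtain ⟨m, hm⟩ := WithTop.ne_top_iff_exists.mp htop
    obtain ⟨G, h1, h2, h3⟩ := (hf.order_eq_int_iff m).mp hm.symm
    rw [← hm, eq_comm, hg.order_eq_int_iff]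
    exact ⟨G, h1, h2, hfg.symm.trans h3⟩

private lemma ord_mul {f g : ℂ → ℂ} {z : ℂ} {m n : ℤ} (hf : MeromorphicAt f z)
    (hg : MeromorphicAt g z) (hm : hf.order = (m : WithTop ℤ)) (hn : hg.order = (n : WithTop ℤ))
    (hfg : MeromorphicAt (fun w => f w * g w) z) : hfg.order = ((m + n : ℤ) : WithTop ℤ) := by
  obtain ⟨F, hF1, hF2, hF3⟩ := (hf.order_eq_int_iff m).mp hm
  obtain ⟨G, hG1, hG2, hG3⟩ := (hg.order_eq_int_iff n).mp hn
  rw [hfg.order_eq_int_iff]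
  refine ⟨fun w => F w * G w, hF1.mul hG1, mul_ne_zero hF2 hG2, ?_⟩
  filter_upwards [hF3, hG3, eventually_mem_nhdsWithin] with w h1 h2 h3
  have hwz : w - z ≠ 0 := sub_ne_zero.mpr h3
  simp only [smul_eq_mul] at *
  rw [h1, h2, zpow_add₀ hwz]; ring

private lemma ord_pow {f : ℂ → ℂ} {z : ℂ} {m : ℤ} (hf : MeromorphicAt f z)
    (hm : hf.order = (m : WithTop ℤ)) :
    ∀ (k : ℕ) (h : MeromorphicAt (fun w => f w ^ k) z),
      h.order = (((k : ℤ) * m : ℤ) : WithTop ℤ) := by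
  intro k
  induction k with
  | zero =>
    intro h
    have he : (fun w => f w ^ 0) = (fun _ : ℂ => (1 : ℂ)) := funext fun w => pow_zero _
    rw [ord_fun_congr he h (he ▸ h), ord_const one_ne_zero z]
    norm_num
  | succ k ih =>
    intro h
    have he : (fun w => f w ^ (k + 1)) = (fun w => f w ^ k * f w) := funext fun w => pow_succ _ _
    have hk : MeromorphicAt (fun w => f w ^ k) z := hf.pow k
    have := ord_mul hk hf (ih hk) hm (he ▸ h)
    rw [ord_fun_congr he h (he ▸ h), this]
    congr 1
    push_cast
    ring

private lemma ord_add_const {D : ℂ → ℂ} {z : ℂ} {k : ℤ} (hD : MeromorphicAt D z)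
    (hko : hD.order = (k : WithTop ℤ)) (hkpos : 0 < k) {c : ℂ} (hc : c ≠ 0)
    (h : MeromorphicAt (fun w => D w + c) z) : h.order = ((0 : ℤ) : WithTop ℤ) := by
  obtain ⟨H, h1, h2, h3⟩ := (hD.order_eq_int_iff k).mp hko
  have hkn : k.toNat ≠ 0 := by omega
  rw [h.order_eq_int_iff]
  refine ⟨fun w => (w - z) ^ k.toNat * H w + c, ?_, ?_, ?_⟩
  · exact ((((analyticAt_id.sub analyticAt_const).pow k.toNat).mul h1).add analyticAt_const :)
  · simp [sub_self, zero_pow hkn, hc]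
  · filter_upwards [h3] with w hw
    simp only [smul_eq_mul] at hw ⊢
    rw [zpow_zero, one_mul, hw]
    congr 1
    rw [← zpow_natCast, Int.toNat_of_nonneg hkpos.le]

private lemma ord_add_const_neg {f : ℂ → ℂ} {z : ℂ} {m : ℤ} (hf : MeromorphicAt f z)
    (hm : hf.order = (m : WithTop ℤ)) (hneg : m < 0) (c : ℂ)
    (h : MeromorphicAt (fun w => f w + c) z) : h.order = (m : WithTop ℤ) := by
  obtain ⟨H, h1, h2, h3⟩ := (hf.order_eq_int_iff m).mp hm
  have hmn : (-m).toNat ≠ 0 := by omega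
  rw [h.order_eq_int_iff]
  refine ⟨fun w => H w + c * (w - z) ^ (-m).toNat, ?_, ?_, ?_⟩
  · exact (h1.add (analyticAt_const.mul ((analyticAt_id.sub analyticAt_const).pow _)) :)
  · simp [sub_self, zero_pow hmn, h2]
  · filter_upwards [h3, eventually_mem_nhdsWithin] with w hw hwz
    have h0 : (w - z) ≠ 0 := sub_ne_zero.mpr hwz
    simp only [smul_eq_mul] at *
    rw [hw, mul_add]
    congr 1
    have : (w - z) ^ (m : ℤ) * (w - z) ^ ((-m).toNat : ℕ) = 1 := by
      rw [← zpow_natCast, ← zpow_add₀ h0, Int.toNat_of_nonneg (by omega : (0:ℤ) ≤ -m)]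
      simp
    calc c = c * ((w - z) ^ (m : ℤ) * (w - z) ^ ((-m).toNat : ℕ)) := by rw [this, mul_one]
      _ = (w - z) ^ (m : ℤ) * (c * (w - z) ^ (-m).toNat) := by ring

private lemma mero_msProd {ι : Type*} (F : ι → ℂ → ℂ) (z : ℂ) :
    ∀ (s : Multiset ι), (∀ i ∈ s, MeromorphicAt (F i) z) →
      MeromorphicAt (fun w => (s.map (fun i => F i w)).prod) z := by
  refine Multiset.induction ?_ ?_
  · intro _
    simpa using MeromorphicAt.const (1 : ℂ) z
  · intro a s ih hall
    simp only [Multiset.map_cons, Multiset.prod_cons]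
    exact ((hall a (Multiset.mem_cons_self a s)).mul
      (ih fun i hi => hall i (Multiset.mem_cons_of_mem hi)) :)

private lemma ord_msProd {ι : Type*} (F : ι → ℂ → ℂ) (o : ι → ℤ) (z : ℂ) :
    ∀ (s : Multiset ι),
      (∀ i ∈ s, ∃ h : MeromorphicAt (F i) z, h.order = ((o i : ℤ) : WithTop ℤ)) →
      ∃ hp : MeromorphicAt (fun w => (s.map (fun i => F i w)).prod) z,
        hp.order = (((s.map o).sum : ℤ) : WithTop ℤ) := by
  refine Multiset.induction ?_ ?_
  · intro _
    simp only [Multiset.map_zero, Multiset.prod_zero, Multiset.sum_zero]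
    exact ⟨MeromorphicAt.const 1 z, ord_const one_ne_zero z _⟩
  · intro a s ih hall
    obtain ⟨ha, hao⟩ := hall a (Multiset.mem_cons_self a s)
    obtain ⟨hs, hso⟩ := ih (fun i hi => hall i (Multiset.mem_cons_of_mem hi))
    simp only [Multiset.map_cons, Multiset.prod_cons, Multiset.sum_cons]
    exact ⟨(ha.mul hs :), ord_mul ha hs hao hso _⟩

private lemma ord_finProd {ι : Type*} (s : Finset ι) (F : ι → ℂ → ℂ) (o : ι → ℤ) (z : ℂ)
    (h : ∀ i ∈ s, ∃ h : MeromorphicAt (F i) z, h.order = ((o i : ℤ) : WithTop ℤ)) :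
    ∃ hp : MeromorphicAt (fun w => ∏ i ∈ s, F i w) z,
      hp.order = ((∑ i ∈ s, o i : ℤ) : WithTop ℤ) :=
  ord_msProd F o z s.val (fun i hi => h i hi)

private lemma core_div (P : ℂ[X]) (n : ℕ) (hmonic : P.Monic) (hdeg : P.natDegree = n)
    (h0 : P.eval 0 ≠ 0) (f : ℂ → ℂ) (hf : Mero f) (c₁ : ℂ) (hc₁ : c₁ ≠ 0)
    (z : ℂ) (D : ℂ → ℂ) (k : ℤ) (hk : 0 < k)
    (hDm : MeromorphicAt D z) (hDo : hDm.order = (k : WithTop ℤ))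
    (heq : ∀ w, P.eval (f w) = (D w + P.eval 0) / (c₁ * D w)) :
    ∃ p : ℤ, 1 ≤ p ∧ k = n * p := by
  have hsplit : Splits P := IsAlgClosed.splits P
  have hProots : P = (P.roots.map fun a => X - C a).prod :=
    hsplit.eq_prod_roots_of_monic hmonic
  have hcard : P.roots.card = n := by rw [splits_iff_card_roots.mp hsplit, hdeg]
  set F : ℂ → ℂ := fun w => (P.roots.map fun r => f w - r).prod with hFdef
  have hFeval : ∀ w, P.eval (f w) = F w := by
    intro w
    conv_lhs => rw [hProots]
    rw [eval_multiset_prod, Multiset.map_map]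
    simp [Function.comp]
    rfl
  -- basic meromorphy facts
  have hfr : ∀ r : ℂ, MeromorphicAt (fun w => f w - r) z :=
    fun r => ((hf z).sub (MeromorphicAt.const r z) :)
  have hFm : MeromorphicAt F z := mero_msProd _ z P.roots (fun r _ => hfr r)
  have hNm : MeromorphicAt (fun w => D w + P.eval 0) z :=
    (hDm.add (MeromorphicAt.const _ z) :)
  have hNo : hNm.order = ((0 : ℤ) : WithTop ℤ) := ord_add_const hDm hDo hk h0 hNm
  have hCDm : MeromorphicAt (fun w => c₁ * D w) z := ((MeromorphicAt.const c₁ z).mul hDm :)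
  have hCDo : hCDm.order = (k : WithTop ℤ) := by
    have := ord_mul (MeromorphicAt.const c₁ z) hDm (ord_const hc₁ z _) hDo hCDm
    rwa [zero_add] at this
  -- D is eventually nonzero on the punctured neighborhood
  have hDne : ∀ᶠ w in nhdsWithin z {z}ᶜ, D w ≠ 0 := by
    obtain ⟨H, h1, h2, h3⟩ := (hDm.order_eq_int_iff k).mp hDo
    have h4 : ∀ᶠ w in nhdsWithin z {z}ᶜ, H w ≠ 0 :=
      (h1.continuousAt.eventually_ne h2).filter_mono nhdsWithin_le_nhds
    filter_upwards [h3, h4, eventually_mem_nhdsWithin] with w hw hH hwz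
    rw [hw]
    simp only [smul_eq_mul]
    exact mul_ne_zero (zpow_ne_zero _ (sub_ne_zero.mpr hwz)) hH
  have hFCDm : MeromorphicAt (fun w => F w * (c₁ * D w)) z := (hFm.mul hCDm :)
  have hFCD : (fun w => F w * (c₁ * D w)) =ᶠ[nhdsWithin z {z}ᶜ] (fun w => D w + P.eval 0) := by
    filter_upwards [hDne] with w hw
    have hcd : c₁ * D w ≠ 0 := mul_ne_zero hc₁ hw
    rw [← hFeval w, heq w, div_mul_cancel₀ _ hcd]
  have hFCDo : hFCDm.order = ((0 : ℤ) : WithTop ℤ) := by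
    rw [ord_congr hFCDm hNm hFCD, hNo]
  by_cases hpole : ∃ m : ℤ, (hf z).order = (m : WithTop ℤ) ∧ m < 0
  · obtain ⟨m, hmo, hmneg⟩ := hpole
    have hro : ∀ r : ℂ, (hfr r).order = (m : WithTop ℤ) := by
      intro r
      have he : (fun w => f w + (-r)) = (fun w => f w - r) := funext fun w => by ring
      rw [← ord_fun_congr he (he ▸ hfr r) (hfr r)]
      exact ord_add_const_neg (hf z) hmo hmneg (-r) _
    obtain ⟨hFm', hFo⟩ := ord_msProd (fun (r : ℂ) (w : ℂ) => f w - r) (fun _ => m) z P.roots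
      (fun r _ => ⟨hfr r, hro r⟩)
    have hsum : (P.roots.map (fun _ => m)).sum = (n : ℤ) * m := by
      rw [Multiset.map_const', Multiset.sum_replicate, hcard]
      simp [mul_comm]
    have h1 := ord_mul hFm' hCDm (by rw [hFo, hsum]) hCDo hFCDm
    rw [hFCDo] at h1
    have h2 : (0 : ℤ) = (n : ℤ) * m + k := by exact_mod_cast h1
    refine ⟨-m, by omega, by linarith⟩
  · push_neg at hpole
    exfalso
    by_cases htop : ∃ r ∈ P.roots, (hfr r).order = ⊤
    · obtain ⟨r, hrmem, hrtop⟩ := htop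
      have hev : ∀ᶠ w in nhdsWithin z {z}ᶜ, f w - r = 0 := (hfr r).order_eq_top_iff.mp hrtop
      have hFev : ∀ᶠ w in nhdsWithin z {z}ᶜ, F w * (c₁ * D w) = 0 := by
        filter_upwards [hev] with w hw
        have : F w = 0 := by
          apply Multiset.prod_eq_zero
          rw [← hw]
          exact Multiset.mem_map.mpr ⟨r, hrmem, rfl⟩
        rw [this, zero_mul]
      have := hFCDm.order_eq_top_iff.mpr hFev
      rw [hFCDo] at this
      exact (by simp : ((0 : ℤ) : WithTop ℤ) ≠ ⊤) this
    · push_neg at htop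
      set o : ℂ → ℤ := fun r => ((hfr r).order).untopD 0 with hodef
      have hor : ∀ r ∈ P.roots, (hfr r).order = ((o r : ℤ) : WithTop ℤ) := by
        intro r hr
        obtain ⟨m, hm⟩ := WithTop.ne_top_iff_exists.mp (htop r hr)
        rw [← hm]
        simp [hodef, ← hm]
      have honn : ∀ r ∈ P.roots, 0 ≤ o r := by
        intro r hr
        by_contra hno
        have he : (fun w => (f w - r) + r) = f := funext fun w => by ring
        have hm1 : MeromorphicAt (fun w => (f w - r) + r) z :=
          ((hfr r).add (MeromorphicAt.const r z) :)
        have hford : (hf z).order = ((o r : ℤ) : WithTop ℤ) := by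
          rw [← ord_fun_congr he hm1 (hf z)]
          exact ord_add_const_neg (hfr r) (hor r hr) (by omega) r hm1
        have := hpole (o r) hford
        omega
      obtain ⟨hFm', hFo⟩ := ord_msProd (fun (r : ℂ) (w : ℂ) => f w - r) o z P.roots
        (fun r hr => ⟨hfr r, hor r hr⟩)
      have h1 := ord_mul hFm' hCDm hFo hCDo hFCDm
      rw [hFCDo] at h1
      have h2 : (0 : ℤ) = (P.roots.map o).sum + k := by exact_mod_cast h1
      have h3 : 0 ≤ (P.roots.map o).sum :=
        Multiset.sum_nonneg (by
          intro x hx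
          obtain ⟨r, hr, rfl⟩ := Multiset.mem_map.mp hx
          exact honn r hr)
      omega

private lemma aMult_order {g : ℂ → ℂ} (hg : Mero g) (a z : ℂ) (h : 0 < aMult g a z) :
    ∃ κ : ℤ, 0 < κ ∧ aMult g a z = κ.toNat ∧
      ∀ hm : MeromorphicAt (fun w => g w - a) z, hm.order = (κ : WithTop ℤ) := by
  have hga : MeromorphicAt (fun w => g w - a) z := ((hg z).sub (MeromorphicAt.const a z) :)
  rw [aMult, mOrder, dif_pos hga, ← hga.order_def] at h ⊢
  by_cases htop : hga.order = ⊤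
  · rw [htop] at h; simp at h
  · obtain ⟨κ, hκ⟩ := WithTop.ne_top_iff_exists.mp htop
    rw [← hκ, WithTop.untopD_coe] at h ⊢
    exact ⟨κ, by omega, rfl, fun hm => hκ.symm⟩

private lemma ord_shift {g : ℂ → ℂ} {z a : ℂ} {κ : ℤ} (hga : MeromorphicAt (fun w => g w - a) z)
    (hκ : hga.order = (κ : WithTop ℤ)) (hκpos : 0 < κ) {a' : ℂ} (hne : a ≠ a')
    (h : MeromorphicAt (fun w => g w - a') z) : h.order = ((0 : ℤ) : WithTop ℤ) := by
  have he : (fun w => (g w - a) + (a - a')) = (fun w => g w - a') := funext fun w => by ring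
  have hm1 : MeromorphicAt (fun w => (g w - a) + (a - a')) z :=
    (hga.add (MeromorphicAt.const _ z) :)
  rw [← ord_fun_congr he hm1 h]
  exact ord_add_const hga hκ hκpos (sub_ne_zero.mpr hne) hm1

end Aux

open Polynomial in
theorem multiplicity_bounds_for_g (P : ℂ[X]) (n m₁ m₂ : ℕ)
    (hmonic : P.Monic) (hdeg : P.natDegree = n)
    (h0 : P.eval 0 ≠ 0)
    (b : Fin m₁ → ℂ) (cc : Fin m₂ → ℂ) (l : Fin m₂ → ℕ)
    (hinj : Function.Injective (Sum.elim b cc))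
    (hl2 : ∀ i, 2 ≤ l i) (hln : ∀ i, l i < n)
    (hfact : P - C (P.eval 0) =
      (∏ j : Fin m₁, (X - C (b j))) * ∏ i : Fin m₂, (X - C (cc i)) ^ (l i))
    (f g : ℂ → ℂ) (hf : Mero f) (hg : Mero g)
    (hfc : Nonconst f) (hgc : Nonconst g)
    (c₁ : ℂ) (hc₁ : c₁ ≠ 0)
    (heq : ∀ z, P.eval (f z) = P.eval (g z) / (c₁ * (P.eval (g z) - P.eval 0))) :
    (∀ z, ∀ j : Fin m₁, 0 < aMult g (b j) z → n ≤ aMult g (b j) z) ∧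
    (∀ z, ∀ i : Fin m₂, 0 < aMult g (cc i) z → 2 ≤ aMult g (cc i) z) := by
  classical
  have hDfun : (fun w => P.eval (g w) - P.eval 0) =
      (fun w => (∏ j : Fin m₁, (g w - b j)) * ∏ i : Fin m₂, (g w - cc i) ^ (l i)) := by
    funext w
    have h1 := congrArg (Polynomial.eval (g w)) hfact
    simpa [Polynomial.eval_prod] using h1
  have heq' : ∀ w, P.eval (f w) =
      ((P.eval (g w) - P.eval 0) + P.eval 0) / (c₁ * (P.eval (g w) - P.eval 0)) := by
    intro w
    rw [sub_add_cancel]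
    exact heq w
  have hbb : ∀ j j' : Fin m₁, j' ≠ j → b j ≠ b j' := by
    intro j j' hne hEq
    exact hne (by simpa using (Sum.inl_injective.eq_iff.mp (congrArg id
      (hinj (a₁ := Sum.inl j) (a₂ := Sum.inl j') (by simpa using hEq)))).symm)
  have hbc : ∀ (j : Fin m₁) (i : Fin m₂), b j ≠ cc i := by
    intro j i hEq
    exact Sum.inl_ne_inr (hinj (a₁ := Sum.inl j) (a₂ := Sum.inr i) (by simpa using hEq))
  constructor
  · intro z j hpos
    obtain ⟨κ, hκpos, hval, hord⟩ := aMult_order hg (b j) z hpos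
    have hgb : MeromorphicAt (fun w => g w - b j) z :=
      ((hg z).sub (MeromorphicAt.const (b j) z) :)
    obtain ⟨hAm, hAo⟩ := ord_finProd Finset.univ (fun (j' : Fin m₁) w => g w - b j')
      (fun j' => if j' = j then κ else 0) z (by
        intro j' _
        by_cases hjj : j' = j
        · subst hjj
          exact ⟨hgb, by simpa using hord hgb⟩
        · refine ⟨((hg z).sub (MeromorphicAt.const (b j') z) :), ?_⟩
          simpa [hjj] using ord_shift hgb (hord hgb) hκpos (hbb j j' hjj)
            ((hg z).sub (MeromorphicAt.const (b j') z) :))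
    obtain ⟨hBm, hBo⟩ := ord_finProd Finset.univ (fun (i : Fin m₂) w => (g w - cc i) ^ (l i))
      (fun _ => 0) z (by
        intro i _
        have hgcc : MeromorphicAt (fun w => g w - cc i) z :=
          ((hg z).sub (MeromorphicAt.const (cc i) z) :)
        have h0 := ord_shift hgb (hord hgb) hκpos (hbc j i) hgcc
        have hpow : MeromorphicAt (fun w => (g w - cc i) ^ (l i)) z := (hgcc.pow (l i) :)
        refine ⟨hpow, ?_⟩
        have := ord_pow hgcc h0 (l i) hpow
        simpa using this)
    have hAsum : (∑ j' : Fin m₁, if j' = j then κ else 0) = κ := by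
      rw [Finset.sum_ite_eq' Finset.univ j (fun _ => κ)]
      simp
    have hBsum : (∑ _i : Fin m₂, (0 : ℤ)) = 0 := by simp
    have hPm : MeromorphicAt (fun w => (∏ j' : Fin m₁, (g w - b j')) *
        ∏ i : Fin m₂, (g w - cc i) ^ (l i)) z := (hAm.mul hBm :)
    have hPo : hPm.order = (κ : WithTop ℤ) := by
      have := ord_mul hAm hBm (by rw [hAo, hAsum]) (by rw [hBo, hBsum]) hPm
      rwa [add_zero] at this
    have hDm : MeromorphicAt (fun w => P.eval (g w) - P.eval 0) z := by
      rw [hDfun]; exact hPm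
    have hDo : hDm.order = (κ : WithTop ℤ) := by
      rw [ord_fun_congr hDfun hDm hPm]; exact hPo
    obtain ⟨p, hp1, hp2⟩ := core_div P n hmonic hdeg h0 f hf c₁ hc₁ z _ κ hκpos hDm hDo heq'
    have hnk : (n : ℤ) ≤ κ := by nlinarith
    rw [hval]; omega
  · intro z i hpos
    obtain ⟨κ, hκpos, hval, hord⟩ := aMult_order hg (cc i) z hpos
    have hgcc : MeromorphicAt (fun w => g w - cc i) z :=
      ((hg z).sub (MeromorphicAt.const (cc i) z) :)
    obtain ⟨hAm, hAo⟩ := ord_finProd Finset.univ (fun (j' : Fin m₁) w => g w - b j')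
      (fun _ => 0) z (by
        intro j' _
        refine ⟨((hg z).sub (MeromorphicAt.const (b j') z) :), ?_⟩
        exact ord_shift hgcc (hord hgcc) hκpos (fun hEq => hbc j' i hEq.symm) _)
    obtain ⟨hBm, hBo⟩ := ord_finProd Finset.univ (fun (i' : Fin m₂) w => (g w - cc i') ^ (l i'))
      (fun i' => if i' = i then (l i : ℤ) * κ else 0) z (by
        intro i' _
        by_cases hii : i' = i
        · subst hii
          have hpow : MeromorphicAt (fun w => (g w - cc i') ^ (l i')) z := (hgcc.pow (l i') :)
          refine ⟨hpow, ?_⟩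
          simpa using ord_pow hgcc (hord hgcc) (l i') hpow
        · have hcc' : cc i ≠ cc i' := by
            intro hEq
            exact hii (by simpa using (hinj (a₁ := Sum.inr i') (a₂ := Sum.inr i)
              (by simpa using hEq.symm)))
          have hgcc' : MeromorphicAt (fun w => g w - cc i') z :=
            ((hg z).sub (MeromorphicAt.const (cc i') z) :)
          have h0 := ord_shift hgcc (hord hgcc) hκpos hcc' hgcc'
          have hpow : MeromorphicAt (fun w => (g w - cc i') ^ (l i')) z := (hgcc'.pow (l i') :)
          refine ⟨hpow, ?_⟩
          have := ord_pow hgcc' h0 (l i') hpow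
          simpa [hii] using this)
    have hAsum : (∑ _j : Fin m₁, (0 : ℤ)) = 0 := by simp
    have hBsum : (∑ i' : Fin m₂, if i' = i then (l i : ℤ) * κ else 0) = (l i : ℤ) * κ := by
      rw [Finset.sum_ite_eq' Finset.univ i (fun _ => (l i : ℤ) * κ)]
      simp
    have hPm : MeromorphicAt (fun w => (∏ j' : Fin m₁, (g w - b j')) *
        ∏ i' : Fin m₂, (g w - cc i') ^ (l i')) z := (hAm.mul hBm :)
    have hPo : hPm.order = (((l i : ℤ) * κ : ℤ) : WithTop ℤ) := by
      have := ord_mul hAm hBm (by rw [hAo, hAsum]) (by rw [hBo, hBsum]) hPm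
      rwa [zero_add] at this
    have hDm : MeromorphicAt (fun w => P.eval (g w) - P.eval 0) z := by
      rw [hDfun]; exact hPm
    have hDo : hDm.order = (((l i : ℤ) * κ : ℤ) : WithTop ℤ) := by
      rw [ord_fun_congr hDfun hDm hPm]; exact hPo
    have hlpos : (0 : ℤ) < (l i : ℤ) * κ := by
      have : (0 : ℤ) < (l i : ℤ) := by have := hl2 i; omega
      positivity
    obtain ⟨p, hp1, hp2⟩ := core_div P n hmonic hdeg h0 f hf c₁ hc₁ z _ _ hlpos hDm hDo heq'
    have hnp : (n : ℤ) ≤ (n : ℤ) * p := by nlinarith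
    have hlin : (l i : ℤ) < (n : ℤ) := by exact_mod_cast hln i
    rw [hval]
    by_contra hcon
    have hκ1 : κ = 1 := by omega
    rw [hκ1, mul_one] at hp2
    omega
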